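/- For every α ∈ (0, 1/4) and every dimension d ≥ 2, there exists a set of M(α) := ⌊exp((d/2)(log 2 + 2α log(2α) + (1−2α) log(1−2α)))⌋ binary vectors z¹,…,z^{M(α)} ∈ {0,1}^d such that (i) every vector has first coordinate equal to 0, and (ii) for all j ≠ k, αd ≤ ‖zʲ − zᵏ‖₂² ≤ d. -/

import Mathlib

open Finset Real

private lemma zmod2_cases' (a : ZMod 2) : a = 0 ∨ a = 1 := by revert a; decide

private lemma sq_diff_val (a b : ZMod 2) :
    (((a.val : ℝ) - (b.val : ℝ))^2) = if a = b then 0 else 1 := by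
  rcases zmod2_cases' a with rfl | rfl <;> rcases zmod2_cases' b with rfl | rfl <;>
    simp [ZMod.val_one] <;> norm_num
private lemma card_norm_ball (n t : ℕ) :
    ((univ : Finset (Fin n → ZMod 2)).filter (fun y => hammingNorm y ≤ t)).card
      = ∑ i ∈ Finset.range (t+1), n.choose i := by
  have h1 : ((univ : Finset (Fin n → ZMod 2)).filter (fun y => hammingNorm y ≤ t)).card
      = ((univ : Finset (Finset (Fin n))).filter (fun s => s.card ≤ t)).card := by
    apply Finset.card_nbij' (i := fun y => ({i | y i ≠ 0} : Finset (Fin n)))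
      (j := fun s => fun i => if i ∈ s then 1 else 0)
    · intro y hy
      simp only [Finset.mem_coe, mem_filter, mem_univ, true_and] at hy ⊢
      exact hy
    · intro s hs
      simp only [Finset.mem_coe, mem_filter, mem_univ, true_and] at hs ⊢
      rw [hammingNorm]
      convert hs using 2
      ext i
      simp
    · intro y _
      ext i
      simp only [mem_filter, mem_univ, true_and]
      rcases zmod2_cases' (y i) with h | h <;> simp [h]
    · intro s _
      ext i
      simp
  rw [h1]
  have h2 : (univ : Finset (Finset (Fin n))).filter (fun s => s.card ≤ t)
      = (Finset.range (t+1)).biUnion (fun i => Finset.powersetCard i univ) := by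
    ext s
    simp [Nat.lt_succ_iff, Finset.mem_powersetCard_univ]
  rw [h2, Finset.card_biUnion]
  · exact Finset.sum_congr rfl fun i _ => by simp [Finset.card_powersetCard]
  · intro i _ j _ hij
    simp only [Finset.disjoint_left, Finset.mem_powersetCard_univ]
    intro s h1 h2
    exact hij (h1 ▸ h2 ▸ rfl)

private lemma card_ball (n t : ℕ) (x : Fin n → ZMod 2) :
    ((univ : Finset (Fin n → ZMod 2)).filter (fun y => hammingDist y x ≤ t)).card
      = ∑ i ∈ Finset.range (t+1), n.choose i := by
  rw [← card_norm_ball n t]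
  apply Finset.card_nbij' (i := fun y => y - x) (j := fun y => y + x)
  · intro y hy
    simp only [Finset.mem_coe, mem_filter, mem_univ, true_and] at hy ⊢
    rwa [hammingDist_comm, hammingDist_eq_hammingNorm, neg_add_eq_sub] at hy
  · intro y hy
    simp only [Finset.mem_coe, mem_filter, mem_univ, true_and] at hy ⊢
    rwa [hammingDist_comm, hammingDist_eq_hammingNorm, neg_add_eq_sub, add_sub_cancel_right]
  · intro y _; simp
  · intro y _; simp
private lemma exists_code (n r : ℕ) (hr : 1 ≤ r) :
    ∃ S : Finset (Fin n → ZMod 2),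
      (∀ x ∈ S, ∀ y ∈ S, x ≠ y → r ≤ hammingDist x y) ∧
      2^n ≤ S.card * ∑ i ∈ Finset.range r, n.choose i := by
  classical
  set good : Finset (Fin n → ZMod 2) → Prop :=
    fun S => ∀ x ∈ S, ∀ y ∈ S, x ≠ y → r ≤ hammingDist x y with hgood
  have hne : ((univ : Finset (Finset (Fin n → ZMod 2))).filter good).Nonempty := by
    refine ⟨∅, ?_⟩
    simp [hgood]
  obtain ⟨S, hSmem, hSmax⟩ := Finset.exists_max_image _ Finset.card hne
  simp only [mem_filter, mem_univ, true_and] at hSmem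
  refine ⟨S, hSmem, ?_⟩
  -- covering property
  have hcov : ∀ x : Fin n → ZMod 2, ∃ s ∈ S, hammingDist x s ≤ r - 1 := by
    intro x
    by_cases hx : x ∈ S
    · exact ⟨x, hx, by simp⟩
    by_contra h
    push_neg at h
    have hgood' : good (insert x S) := by
      intro a ha b hb hab
      rw [Finset.mem_insert] at ha hb
      rcases ha with ha | ha
      · rcases hb with hb | hb
        · exact absurd (ha.trans hb.symm) hab
        · subst ha; have := h b hb; omega
      · rcases hb with hb | hb
        · subst hb; have := h a ha; rw [hammingDist_comm]; omega
        · exact hSmem a ha b hb hab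
    have := hSmax (insert x S) (Finset.mem_filter.2 ⟨Finset.mem_univ _, hgood'⟩)
    rw [Finset.card_insert_of_notMem hx] at this
    omega
  -- counting
  have hsub : (univ : Finset (Fin n → ZMod 2)) ⊆
      S.biUnion (fun s => univ.filter (fun y => hammingDist y s ≤ r - 1)) := by
    intro x _
    obtain ⟨s, hs, hd⟩ := hcov x
    exact Finset.mem_biUnion.2 ⟨s, hs, by simp [hd]⟩
  have h1 := Finset.card_le_card hsub
  have h2 := Finset.card_biUnion_le (s := S)
    (t := fun s => univ.filter (fun y => hammingDist y s ≤ r - 1))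
  have h3 : ∀ s : Fin n → ZMod 2,
      (univ.filter (fun y => hammingDist y s ≤ r - 1)).card
        = ∑ i ∈ Finset.range r, n.choose i := by
    intro s
    rw [card_ball n (r-1) s]
    have : r - 1 + 1 = r := by omega
    rw [this]
  have h4 : (Finset.card (univ : Finset (Fin n → ZMod 2))) = 2^n := by
    simp [Finset.card_univ]
  have h5 : (∑ s ∈ S, (univ.filter (fun y => hammingDist y s ≤ r - 1)).card)
      = S.card * ∑ i ∈ Finset.range r, n.choose i := by
    rw [Finset.sum_congr rfl fun s _ => h3 s, Finset.sum_const, smul_eq_mul]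
  rw [← h4]; exact h1.trans (h2.trans (le_of_eq h5))
private lemma volume_bound (n t : ℕ) (p : ℝ) (hp0 : 0 < p) (hp2 : p ≤ 1/2) (htn : t ≤ n)
    (ht : (t:ℝ) ≤ p * n) :
    (∑ i ∈ Finset.range (t+1), (n.choose i : ℝ)) * (p ^ t * (1-p) ^ (n - t)) ≤ 1 := by
  have hq0 : (0:ℝ) < 1 - p := by linarith
  have hpq : p ≤ 1 - p := by linarith
  have key : ∀ i ∈ Finset.range (t+1),
      (n.choose i : ℝ) * (p ^ t * (1-p) ^ (n - t)) ≤ (n.choose i : ℝ) * (p ^ i * (1-p) ^ (n - i)) := by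
    intro i hi
    rw [Finset.mem_range, Nat.lt_succ_iff] at hi
    apply mul_le_mul_of_nonneg_left _ (by positivity)
    have e1 : p ^ t = p ^ i * p ^ (t - i) := by rw [← pow_add]; congr 1; omega
    have e2 : (1-p) ^ (n - i) = (1-p) ^ (n - t) * (1-p) ^ (t - i) := by
      rw [← pow_add]; congr 1; omega
    rw [e1, e2]
    have h3 : p ^ (t - i) ≤ (1-p) ^ (t - i) := pow_le_pow_left₀ hp0.le hpq _
    calc p ^ i * p ^ (t-i) * (1-p)^(n-t) ≤ p ^ i * (1-p)^(t-i) * (1-p)^(n-t) := by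
          apply mul_le_mul_of_nonneg_right _ (by positivity)
          exact mul_le_mul_of_nonneg_left h3 (by positivity)
      _ = p ^ i * ((1-p)^(n-t) * (1-p)^(t-i)) := by ring
  calc (∑ i ∈ Finset.range (t+1), (n.choose i : ℝ)) * (p ^ t * (1-p) ^ (n - t))
      = ∑ i ∈ Finset.range (t+1), (n.choose i : ℝ) * (p ^ t * (1-p) ^ (n - t)) := by
        rw [Finset.sum_mul]
    _ ≤ ∑ i ∈ Finset.range (t+1), (n.choose i : ℝ) * (p ^ i * (1-p) ^ (n - i)) :=
        Finset.sum_le_sum key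
    _ ≤ ∑ i ∈ Finset.range (n+1), (n.choose i : ℝ) * (p ^ i * (1-p) ^ (n - i)) := by
        apply Finset.sum_le_sum_of_subset_of_nonneg
        · exact Finset.range_subset_range.2 (by omega)
        · intro i _ _; positivity
    _ = 1 := by
        have := add_pow p (1-p) n
        simp only [add_sub_cancel, one_pow] at this
        exact Eq.trans (Finset.sum_congr rfl fun i _ => by ring) this.symm
private lemma numeric (α : ℝ) (hα1 : 0 < α) (hα2 : α < 1/4) (d : ℕ) (hd : 2 ≤ d)
    (M : ℕ)
    (hM : M = Nat.floor (Real.exp ((d / 2 : ℝ) *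
      (Real.log 2 + 2 * α * Real.log (2 * α) + (1 - 2 * α) * Real.log (1 - 2 * α))))) :
    (M:ℝ) * (∑ i ∈ Finset.range (⌈α*d⌉₊), (((d-1).choose i : ℕ) : ℝ)) ≤ 2^(d-1) := by
  set p : ℝ := 2*α with hp
  have hp0 : 0 < p := by positivity
  have hp2 : p < 1/2 := by simp [hp]; linarith
  have hq0 : (0:ℝ) < 1 - p := by linarith
  set n : ℕ := d - 1 with hn
  have hnd : (n:ℝ) = (d:ℝ) - 1 := by
    simp [hn]; push_cast [Nat.cast_sub (by omega : 1 ≤ d)]; ring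
  set r : ℕ := ⌈α*d⌉₊ with hr
  have hd0 : (0:ℝ) < (d:ℝ) := by positivity
  have hαd : (0:ℝ) < α * d := by positivity
  have hr1 : 1 ≤ r := Nat.one_le_iff_ne_zero.2 (by
    simp [hr, Nat.ceil_eq_zero, not_le]; positivity)
  set t : ℕ := r - 1 with ht
  have htr : t + 1 = r := by omega
  have htR : (t:ℝ) < α * d := by
    have h1 : (r:ℝ) < α * d + 1 := Nat.ceil_lt_add_one hαd.le
    have h2 : (t:ℝ) = (r:ℝ) - 1 := by push_cast [ht, Nat.cast_sub hr1]; ring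
    linarith
  have hd2 : (2:ℝ) ≤ (d:ℝ) := by exact_mod_cast hd
  have hαpn : α * d ≤ p * n := by
    rw [hnd, hp]
    nlinarith [mul_nonneg hα1.le (sub_nonneg.2 hd2)]
  have htpn : (t:ℝ) ≤ p * n := le_of_lt (lt_of_lt_of_le htR hαpn)
  have htn : t ≤ n := by
    have : (t:ℝ) < (n:ℝ) := by
      rw [hnd]
      have : α * (d:ℝ) < (d:ℝ)/4 := by nlinarith
      linarith
    exact_mod_cast this.le
  -- key log inequality
  have hMle : (M:ℝ) ≤ Real.exp ((d / 2 : ℝ) *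
      (Real.log 2 + p * Real.log p + (1 - p) * Real.log (1 - p))) := by
    rw [hM]; exact Nat.floor_le (Real.exp_nonneg _)
  have hC : 0 ≤ Real.log 2 + p * Real.log p + (1 - p) * Real.log (1 - p) := by
    have h1 : Real.binEntropy p ≤ Real.log 2 := Real.binEntropy_le_log_two
    rw [Real.binEntropy, Real.log_inv, Real.log_inv] at h1
    linarith
  have hexp : Real.exp ((d / 2 : ℝ) *
      (Real.log 2 + p * Real.log p + (1 - p) * Real.log (1 - p)))
      ≤ (2:ℝ)^n * (p ^ t * (1-p) ^ (n - t)) := by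
    have hlog : (d / 2 : ℝ) * (Real.log 2 + p * Real.log p + (1 - p) * Real.log (1 - p))
        ≤ (n:ℝ) * Real.log 2 + (t:ℝ) * Real.log p + ((n - t : ℕ):ℝ) * Real.log (1-p) := by
      have hdn : (d:ℝ)/2 ≤ (n:ℝ) := by rw [hnd]; linarith [hd2]
      have step1 : (d / 2 : ℝ) * (Real.log 2 + p * Real.log p + (1 - p) * Real.log (1 - p))
          ≤ (n:ℝ) * (Real.log 2 + p * Real.log p + (1 - p) * Real.log (1 - p)) :=
        mul_le_mul_of_nonneg_right hdn hC
      have hlogpq : Real.log p ≤ Real.log (1-p) :=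
        Real.log_le_log hp0 (by linarith)
      have hnt : ((n - t : ℕ):ℝ) = (n:ℝ) - t := by push_cast [Nat.cast_sub htn]; ring
      rw [hnt]
      nlinarith [mul_nonneg (sub_nonneg.2 htpn) (sub_nonneg.2 hlogpq)]
    calc Real.exp _ ≤ Real.exp ((n:ℝ) * Real.log 2 + (t:ℝ) * Real.log p
          + ((n - t : ℕ):ℝ) * Real.log (1-p)) := Real.exp_le_exp.2 hlog
      _ = (2:ℝ)^n * (p ^ t * (1-p) ^ (n - t)) := by
          rw [Real.exp_add, Real.exp_add, Real.exp_nat_mul, Real.exp_nat_mul,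
            Real.exp_nat_mul, Real.exp_log (by norm_num), Real.exp_log hp0,
            Real.exp_log hq0, mul_assoc]
  have hvol := volume_bound n t p hp0 hp2.le htn htpn
  have hVnn : 0 ≤ ∑ i ∈ Finset.range (t+1), ((n.choose i : ℕ) : ℝ) := by positivity
  have hfin : (M:ℝ) * (∑ i ∈ Finset.range (t+1), ((n.choose i : ℕ) : ℝ)) ≤ 2^n := by
    calc (M:ℝ) * (∑ i ∈ Finset.range (t+1), ((n.choose i : ℕ) : ℝ))
        ≤ ((2:ℝ)^n * (p ^ t * (1-p) ^ (n - t))) * (∑ i ∈ Finset.range (t+1), ((n.choose i : ℕ) : ℝ)) :=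
          mul_le_mul_of_nonneg_right (hMle.trans hexp) hVnn
      _ = (2:ℝ)^n * ((∑ i ∈ Finset.range (t+1), ((n.choose i : ℕ) : ℝ)) * (p ^ t * (1-p) ^ (n - t))) := by ring
      _ ≤ (2:ℝ)^n * 1 := mul_le_mul_of_nonneg_left hvol (by positivity)
      _ = 2^n := by ring
  rw [← htr]
  exact hfin

/-- Gilbert–Varshamov-type packing of the Boolean hypercube: for every
`α ∈ (0, 1/4)` and `d ≥ 2`, there exist
`M(α) = ⌊exp((d/2)(log 2 + 2α log(2α) + (1−2α) log(1−2α)))⌋` binary vectors in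
`{0,1}^d`, each with first coordinate `0`, whose pairwise squared distances
satisfy `αd ≤ ‖zʲ − zᵏ‖₂² ≤ d`. -/
theorem gilbert_varshamov_packing (α : ℝ) (hα : α ∈ Set.Ioo (0 : ℝ) (1 / 4))
    (d : ℕ) (hd : 2 ≤ d)
    (M : ℕ)
    (hM : M = Nat.floor (Real.exp ((d / 2 : ℝ) *
      (Real.log 2 + 2 * α * Real.log (2 * α) + (1 - 2 * α) * Real.log (1 - 2 * α))))) :
    ∃ z : Fin M → Fin d → ℝ,
      (∀ (j : Fin M) (i : Fin d), z j i = 0 ∨ z j i = 1) ∧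
      (∀ j : Fin M, z j ⟨0, by omega⟩ = 0) ∧
      (∀ j k : Fin M, j ≠ k →
        α * d ≤ ∑ i : Fin d, (z j i - z k i) ^ 2 ∧
        (∑ i : Fin d, (z j i - z k i) ^ 2) ≤ d) := by
  obtain ⟨hα1, hα2⟩ := hα
  obtain ⟨n, rfl⟩ : ∃ n, d = n + 1 := ⟨d - 1, by omega⟩
  have hnum := numeric α hα1 hα2 (n+1) hd M hM
  set r : ℕ := ⌈α * ((n+1 : ℕ) : ℝ)⌉₊ with hr
  have hαd : (0:ℝ) < α * ((n+1:ℕ):ℝ) := by positivity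
  have hr1 : 1 ≤ r := Nat.one_le_iff_ne_zero.2 (by
    simp [hr, Nat.ceil_eq_zero, not_le]; positivity)
  obtain ⟨S, hScode, hScard⟩ := exists_code n r hr1
  set V : ℕ := ∑ i ∈ Finset.range r, n.choose i with hV
  have hV1 : 1 ≤ V := by
    have := Finset.single_le_sum (f := fun i => n.choose i)
      (fun i _ => Nat.zero_le _) (Finset.mem_range.2 hr1)
    simpa [hV] using this
  have hMS : M ≤ S.card := by
    have hnum' : (M:ℝ) * (V:ℝ) ≤ (2:ℝ)^n := by
      have : ((V:ℕ):ℝ) = ∑ i ∈ Finset.range r, ((n.choose i : ℕ) : ℝ) := by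
        rw [hV]; exact Nat.cast_sum _ _
      rw [this]
      exact hnum
    have h2 : (2:ℝ)^n ≤ (S.card : ℝ) * (V:ℝ) := by exact_mod_cast hScard
    have hV0 : (0:ℝ) < (V:ℝ) := by exact_mod_cast hV1
    have := le_of_mul_le_mul_right (hnum'.trans h2) hV0
    exact_mod_cast this
  set w : Fin M → Fin n → ZMod 2 :=
    fun j => (S.equivFin.symm ⟨j, lt_of_lt_of_le j.2 hMS⟩ : Fin n → ZMod 2) with hw
  have hwS : ∀ j, w j ∈ S := fun j => (S.equivFin.symm _).2
  have hwinj : ∀ j k : Fin M, j ≠ k → w j ≠ w k := by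
    intro j k hjk h
    apply hjk
    have := S.equivFin.symm.injective (Subtype.ext h)
    simpa [Fin.ext_iff] using congrArg Fin.val this
  set z : Fin M → Fin (n+1) → ℝ :=
    fun j i => if h : i = (0 : Fin (n+1)) then 0 else ((w j (i.pred h)).val : ℝ) with hz
  have hz0 : ∀ j, z j 0 = 0 := by intro j; simp [hz]
  refine ⟨z, ?_, ?_, ?_⟩
  · intro j i
    by_cases h : i = (0 : Fin (n+1))
    · left; simp [hz, h]
    · rcases zmod2_cases' (w j (i.pred h)) with h' | h'
      · left; simp only [hz, dif_neg h, h', ZMod.val_zero, Nat.cast_zero]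
      · right; simp only [hz, dif_neg h, h', ZMod.val_one, Nat.cast_one]
  · intro j
    have : (⟨0, by omega⟩ : Fin (n+1)) = 0 := rfl
    rw [this]; exact hz0 j
  · intro j k hjk
    have hdist : (∑ i : Fin (n+1), (z j i - z k i) ^ 2)
        = (hammingDist (w j) (w k) : ℝ) := by
      rw [Fin.sum_univ_succ, hz0, hz0]
      have hterm : ∀ i : Fin n, (z j i.succ - z k i.succ)^2
          = if w j i ≠ w k i then (1:ℝ) else 0 := by
        intro i
        have hs : (i.succ : Fin (n+1)) ≠ 0 := Fin.succ_ne_zero i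
        simp only [hz, dif_neg hs, Fin.pred_succ]
        rw [sq_diff_val]
        by_cases h : w j i = w k i <;> simp [h]
      rw [Finset.sum_congr rfl (fun i _ => hterm i), Finset.sum_boole]
      simp [hammingDist]
    have hge : r ≤ hammingDist (w j) (w k) :=
      hScode _ (hwS j) _ (hwS k) (hwinj j k hjk)
    constructor
    · rw [hdist]
      calc α * ((n+1:ℕ):ℝ) ≤ (r:ℝ) := Nat.le_ceil _
        _ ≤ _ := by exact_mod_cast hge
    · rw [hdist]
      have : hammingDist (w j) (w k) ≤ n := by
        simpa using hammingDist_le_card_fintype (x := w j) (y := w k)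
      calc (hammingDist (w j) (w k) : ℝ) ≤ (n:ℝ) := by exact_mod_cast this
        _ ≤ ((n+1:ℕ):ℝ) := by push_cast; linarith
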